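/- For any closed one-parameter subgroup (circle) S ⊂ G₂ acting via the standard 7-dimensional representation, the fixed-point subspace {v ∈ ℝ⁷ : s·v = v for all s ∈ S} has dimension at most 3. -/

import Mathlib

/-- The elementary 3-form `e^{ijk}` on `ℝ⁷`. -/
def eForm (i j k : Fin 7) (X Y Z : Fin 7 → ℝ) : ℝ :=
  Matrix.det !![X i, X j, X k; Y i, Y j, Y k; Z i, Z j, Z k]

/-- The standard G₂ 3-form `φ₀` on `ℝ⁷`. -/
def phi0 (X Y Z : Fin 7 → ℝ) : ℝ :=
  eForm 0 1 2 X Y Z + eForm 0 3 4 X Y Z + eForm 0 5 6 X Y Z + eForm 1 3 5 X Y Z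
    - eForm 1 4 6 X Y Z - eForm 2 3 6 X Y Z - eForm 2 4 5 X Y Z

/-- `A ∈ G₂ ⊂ SO(7)`: `A` preserves the standard G₂-form `φ₀`. -/
def MemG2 (A : GL (Fin 7) ℝ) : Prop :=
  ∀ X Y Z, phi0 ((A : Matrix (Fin 7) (Fin 7) ℝ).mulVec X)
    ((A : Matrix (Fin 7) (Fin 7) ℝ).mulVec Y) ((A : Matrix (Fin 7) (Fin 7) ℝ).mulVec Z)
      = phi0 X Y Z

/-- The fixed-point subspace `{v ∈ ℝ⁷ : s·v = v for all s ∈ S}` of a circle subgroup,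
given as the continuous image of the circle under `f`. -/
def fixedSpaceOfCircle (f : Circle →* GL (Fin 7) ℝ) : Submodule ℝ (Fin 7 → ℝ) where
  carrier := {v | ∀ z : Circle, ((f z : GL (Fin 7) ℝ) : Matrix (Fin 7) (Fin 7) ℝ).mulVec v = v}
  add_mem' := by
    intro v w hv hw z
    rw [Matrix.mulVec_add, hv z, hw z]
  zero_mem' := by
    intro z
    rw [Matrix.mulVec_zero]
  smul_mem' := by
    intro c v hv z
    rw [Matrix.mulVec_smul, hv z]

section CrossProductLemmas

/-- The standard cross product on `ℝ⁷` associated with the `G₂`-form `φ₀`. -/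
def cross (x y : Fin 7 → ℝ) : Fin 7 → ℝ
  | 0 => (x 1 * y 2 - x 2 * y 1) + (x 3 * y 4 - x 4 * y 3) + (x 5 * y 6 - x 6 * y 5)
  | 1 => -(x 0 * y 2 - x 2 * y 0) + (x 3 * y 5 - x 5 * y 3) - (x 4 * y 6 - x 6 * y 4)
  | 2 => (x 0 * y 1 - x 1 * y 0) - (x 3 * y 6 - x 6 * y 3) - (x 4 * y 5 - x 5 * y 4)
  | 3 => -(x 0 * y 4 - x 4 * y 0) - (x 1 * y 5 - x 5 * y 1) + (x 2 * y 6 - x 6 * y 2)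
  | 4 => (x 0 * y 3 - x 3 * y 0) + (x 1 * y 6 - x 6 * y 1) + (x 2 * y 5 - x 5 * y 2)
  | 5 => -(x 0 * y 6 - x 6 * y 0) + (x 1 * y 3 - x 3 * y 1) - (x 2 * y 4 - x 4 * y 2)
  | 6 => (x 0 * y 5 - x 5 * y 0) - (x 1 * y 4 - x 4 * y 1) - (x 2 * y 3 - x 3 * y 2)

end CrossProductLemmas

open Matrix in
lemma dot_cross (x y z : Fin 7 → ℝ) :
    cross x y ⬝ᵥ z = phi0 x y z := by
  simp [cross, phi0, eForm, dotProduct, Fin.sum_univ_seven, Matrix.det_fin_three]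
  ring

open Matrix in
lemma cross_norm (x y : Fin 7 → ℝ) :
    cross x y ⬝ᵥ cross x y = (x ⬝ᵥ x) * (y ⬝ᵥ y) - (x ⬝ᵥ y)^2 := by
  simp [cross, dotProduct, Fin.sum_univ_seven]
  ring

lemma phi0_cyclic (x y z : Fin 7 → ℝ) : phi0 x y z = phi0 y z x := by
  simp [phi0, eForm, Matrix.det_fin_three]; ring


lemma phi0_add1 (x x' y z : Fin 7 → ℝ) : phi0 (x + x') y z = phi0 x y z + phi0 x' y z := by
  simp [phi0, eForm, Matrix.det_fin_three]; ring

lemma phi0_add2 (x y y' z : Fin 7 → ℝ) : phi0 x (y + y') z = phi0 x y z + phi0 x y' z := by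
  simp [phi0, eForm, Matrix.det_fin_three]; ring

lemma phi0_add3 (x y z z' : Fin 7 → ℝ) : phi0 x y (z + z') = phi0 x y z + phi0 x y z' := by
  simp [phi0, eForm, Matrix.det_fin_three]; ring

lemma cross_add_right (x y y' : Fin 7 → ℝ) :
    cross x (y + y') = cross x y + cross x y' := by
  funext k; fin_cases k <;> (show _ = cross x y _ + cross x y' _) <;> simp [cross] <;> ring

lemma cross_smul_right (x : Fin 7 → ℝ) (c : ℝ) (y : Fin 7 → ℝ) :
    cross x (c • y) = c • cross x y := by
  funext k; fin_cases k <;> (show _ = c * cross x y _) <;> simp [cross] <;> ring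

/-- The identity linear equivalence between `ℝ⁷` (as pi type) and Euclidean space. -/
noncomputable def ell : (Fin 7 → ℝ) ≃ₗ[ℝ] EuclideanSpace ℝ (Fin 7) :=
  (WithLp.linearEquiv 2 ℝ (Fin 7 → ℝ)).symm

open Matrix in
lemma inner_ell (x y : Fin 7 → ℝ) : (inner ℝ (ell x) (ell y) : ℝ) = x ⬝ᵥ y := by
  simp [ell, PiLp.inner_apply, RCLike.inner_apply, dotProduct, mul_comm]

open Matrix in
lemma dot_eq_of_forall {u u' : Fin 7 → ℝ} (h : ∀ z, u ⬝ᵥ z = u' ⬝ᵥ z) : u = u' := by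
  funext i
  have := h (Pi.single i 1)
  simpa [dotProduct_single] using this

set_option maxHeartbeats 4000000 in
open Matrix in
/-- Main algebraic lemma: if `A`, `A²`, `A³` all preserve `φ₀` and `A ≠ 1`, then the fixed
space of `A` has dimension at most `3`. -/
theorem key_lemma (A : Matrix (Fin 7) (Fin 7) ℝ)
    (h1 : ∀ X Y Z, phi0 (A *ᵥ X) (A *ᵥ Y) (A *ᵥ Z) = phi0 X Y Z)
    (h2 : ∀ X Y Z, phi0 ((A^2) *ᵥ X) ((A^2) *ᵥ Y) ((A^2) *ᵥ Z) = phi0 X Y Z)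
    (h3 : ∀ X Y Z, phi0 ((A^3) *ᵥ X) ((A^3) *ᵥ Y) ((A^3) *ᵥ Z) = phi0 X Y Z)
    (hne : A ≠ 1) :
    Module.finrank ℝ (LinearMap.ker (A.mulVecLin - LinearMap.id)) ≤ 3 := by
  classical
  set F : Submodule ℝ (Fin 7 → ℝ) := LinearMap.ker (A.mulVecLin - LinearMap.id) with hF
  set F' : Submodule ℝ (Fin 7 → ℝ) := LinearMap.ker (Aᵀ.mulVecLin - LinearMap.id) with hF'
  have memF : ∀ x, x ∈ F ↔ A *ᵥ x = x := by
    intro x; simp [hF, LinearMap.mem_ker, sub_eq_zero, Matrix.mulVecLin_apply]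
  have memF' : ∀ x, x ∈ F' ↔ Aᵀ *ᵥ x = x := by
    intro x
    simp [hF', LinearMap.mem_ker, sub_eq_zero, Matrix.mulVecLin_apply, Matrix.mulVec_transpose]
  have hdualdot : ∀ (u z : Fin 7 → ℝ), (Aᵀ *ᵥ u) ⬝ᵥ z = u ⬝ᵥ (A *ᵥ z) := by
    intro u z
    rw [Matrix.mulVec_transpose, dotProduct_mulVec]
  have hAdual : ∀ x y, Aᵀ *ᵥ (cross (A *ᵥ x) (A *ᵥ y)) = cross x y := by
    intro x y
    apply dot_eq_of_forall
    intro z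
    rw [hdualdot, dot_cross, dot_cross, h1]
  have hcrossF : ∀ x ∈ F, ∀ y ∈ F, cross x y ∈ F' := by
    intro x hx y hy
    rw [memF'] 
    have h := hAdual x y
    rwa [(memF x).1 hx, (memF y).1 hy] at h
  set FE : Submodule ℝ (EuclideanSpace ℝ (Fin 7)) := F.map (ell : (Fin 7 → ℝ) →ₗ[ℝ] EuclideanSpace ℝ (Fin 7)) with hFE
  set F'E : Submodule ℝ (EuclideanSpace ℝ (Fin 7)) := F'.map (ell : (Fin 7 → ℝ) →ₗ[ℝ] EuclideanSpace ℝ (Fin 7)) with hF'E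
  by_cases hcase : (F'E)ᗮ ≤ FE
  · -- `A` is unipotent, hence (being in G₂ together with its powers) equal to `1`: absurd.
    exfalso
    have hFp : FEᗮ ≤ F'E := by
      have h' := Submodule.orthogonal_le hcase
      rwa [Submodule.orthogonal_orthogonal] at h'
    have hstep : ∀ u : Fin 7 → ℝ, A *ᵥ (A *ᵥ u - u) = A *ᵥ u - u := by
      intro u
      obtain ⟨a, ha, b, hb, hab⟩ := FE.exists_add_mem_mem_orthogonal (ell u)
      obtain ⟨a', ha', rfl⟩ := Submodule.mem_map.1 ha
      set b' : Fin 7 → ℝ := ell.symm b with hb'def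
      have hbb : b = ell b' := by simp [hb'def]
      have hu : u = a' + b' := by
        apply ell.injective
        simp only [LinearEquiv.coe_coe] at hab
        rw [map_add, ← hbb, ← hab]
      have hAa' : A *ᵥ a' = a' := (memF a').1 ha'
      have hr : A *ᵥ b' - b' ∈ F := by
        have hmem : ell (A *ᵥ b' - b') ∈ FEᗮᗮ := by
          rw [Submodule.mem_orthogonal]
          intro w hw
          have hwF' : w ∈ F'E := hFp hw
          obtain ⟨w', hw', rfl⟩ := Submodule.mem_map.1 hwF'
          have hdw : Aᵀ *ᵥ w' = w' := (memF' w').1 hw'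
          have hkey : w' ⬝ᵥ (A *ᵥ b' - b') = 0 := by
            have e1 : w' ⬝ᵥ (A *ᵥ b') = w' ⬝ᵥ b' := by
              rw [← hdualdot, hdw]
            rw [dotProduct_sub, e1, sub_self]
          rw [LinearEquiv.coe_coe, inner_ell]
          exact hkey
        rw [Submodule.orthogonal_orthogonal] at hmem
        obtain ⟨t, ht, htt⟩ := Submodule.mem_map.1 hmem
        have : t = A *ᵥ b' - b' := ell.injective htt
        rwa [this] at ht
      have hAr := (memF _).1 hr
      have hexp : A *ᵥ u - u = A *ᵥ b' - b' := by
        rw [hu, Matrix.mulVec_add, hAa']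
        abel
      rw [hexp]
      exact hAr
    set N : Matrix (Fin 7) (Fin 7) ℝ := A - 1 with hN
    have hNvec : ∀ u, N *ᵥ u = A *ᵥ u - u := by
      intro u; rw [hN, Matrix.sub_mulVec, Matrix.one_mulVec]
    have hNN : N * N = 0 := by
      ext i j
      have hmv : (N * N) *ᵥ (Pi.single j 1) = 0 := by
        rw [← Matrix.mulVec_mulVec, hNvec, hNvec, hstep, sub_self]
      have h0 := congrFun hmv i
      rw [Matrix.mulVec_single] at h0
      simpa using h0
    have hA1 : A = 1 + N := by rw [hN]; abel
    have hA2 : A^2 = 1 + (N + N) := by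
      rw [hA1, pow_two]
      have hexp : (1 + N) * (1 + N) = 1 + (N + N) + N * N := by noncomm_ring
      rw [hexp, hNN, add_zero]
    have hA3 : A^3 = 1 + (N + N + N) := by
      rw [pow_succ, hA2, hA1]
      have hexp : (1 + (N + N)) * (1 + N) = 1 + (N + N + N) + (N * N + N * N) := by
        noncomm_ring
      rw [hexp, hNN, add_zero, add_zero]
    have c1 : ∀ x y z, phi0 (N *ᵥ x) y z + phi0 x (N *ᵥ y) z + phi0 x y (N *ᵥ z) = 0 := by
      intro x y z
      have e1 := h1 x y z
      have e2 := h2 x y z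
      have e3 := h3 x y z
      rw [hA1] at e1
      rw [hA2] at e2
      rw [hA3] at e3
      simp only [Matrix.add_mulVec, Matrix.one_mulVec, phi0_add1, phi0_add2, phi0_add3]
        at e1 e2 e3
      linear_combination (3 : ℝ) * e1 - (3/2 : ℝ) * e2 + (1/3 : ℝ) * e3
    have hskew : ∀ i j, N j i = - N i j := by
      have H012 := c1 (Pi.single 0 1) (Pi.single 1 1) (Pi.single 2 1)
      have H013 := c1 (Pi.single 0 1) (Pi.single 1 1) (Pi.single 3 1)
      have H014 := c1 (Pi.single 0 1) (Pi.single 1 1) (Pi.single 4 1)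
      have H015 := c1 (Pi.single 0 1) (Pi.single 1 1) (Pi.single 5 1)
      have H016 := c1 (Pi.single 0 1) (Pi.single 1 1) (Pi.single 6 1)
      have H023 := c1 (Pi.single 0 1) (Pi.single 2 1) (Pi.single 3 1)
      have H024 := c1 (Pi.single 0 1) (Pi.single 2 1) (Pi.single 4 1)
      have H025 := c1 (Pi.single 0 1) (Pi.single 2 1) (Pi.single 5 1)
      have H026 := c1 (Pi.single 0 1) (Pi.single 2 1) (Pi.single 6 1)
      have H034 := c1 (Pi.single 0 1) (Pi.single 3 1) (Pi.single 4 1)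
      have H035 := c1 (Pi.single 0 1) (Pi.single 3 1) (Pi.single 5 1)
      have H036 := c1 (Pi.single 0 1) (Pi.single 3 1) (Pi.single 6 1)
      have H045 := c1 (Pi.single 0 1) (Pi.single 4 1) (Pi.single 5 1)
      have H046 := c1 (Pi.single 0 1) (Pi.single 4 1) (Pi.single 6 1)
      have H056 := c1 (Pi.single 0 1) (Pi.single 5 1) (Pi.single 6 1)
      have H123 := c1 (Pi.single 1 1) (Pi.single 2 1) (Pi.single 3 1)
      have H124 := c1 (Pi.single 1 1) (Pi.single 2 1) (Pi.single 4 1)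
      have H125 := c1 (Pi.single 1 1) (Pi.single 2 1) (Pi.single 5 1)
      have H126 := c1 (Pi.single 1 1) (Pi.single 2 1) (Pi.single 6 1)
      have H134 := c1 (Pi.single 1 1) (Pi.single 3 1) (Pi.single 4 1)
      have H135 := c1 (Pi.single 1 1) (Pi.single 3 1) (Pi.single 5 1)
      have H136 := c1 (Pi.single 1 1) (Pi.single 3 1) (Pi.single 6 1)
      have H145 := c1 (Pi.single 1 1) (Pi.single 4 1) (Pi.single 5 1)
      have H146 := c1 (Pi.single 1 1) (Pi.single 4 1) (Pi.single 6 1)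
      have H156 := c1 (Pi.single 1 1) (Pi.single 5 1) (Pi.single 6 1)
      have H234 := c1 (Pi.single 2 1) (Pi.single 3 1) (Pi.single 4 1)
      have H235 := c1 (Pi.single 2 1) (Pi.single 3 1) (Pi.single 5 1)
      have H236 := c1 (Pi.single 2 1) (Pi.single 3 1) (Pi.single 6 1)
      have H245 := c1 (Pi.single 2 1) (Pi.single 4 1) (Pi.single 5 1)
      have H246 := c1 (Pi.single 2 1) (Pi.single 4 1) (Pi.single 6 1)
      have H256 := c1 (Pi.single 2 1) (Pi.single 5 1) (Pi.single 6 1)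
      have H345 := c1 (Pi.single 3 1) (Pi.single 4 1) (Pi.single 5 1)
      have H346 := c1 (Pi.single 3 1) (Pi.single 4 1) (Pi.single 6 1)
      have H356 := c1 (Pi.single 3 1) (Pi.single 5 1) (Pi.single 6 1)
      have H456 := c1 (Pi.single 4 1) (Pi.single 5 1) (Pi.single 6 1)
      simp [phi0, eForm, Matrix.det_fin_three, Matrix.mulVec_single, Pi.single_apply,
        Matrix.vecHead, Matrix.vecTail] at H012
      simp [phi0, eForm, Matrix.det_fin_three, Matrix.mulVec_single, Pi.single_apply,
        Matrix.vecHead, Matrix.vecTail] at H013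
      simp [phi0, eForm, Matrix.det_fin_three, Matrix.mulVec_single, Pi.single_apply,
        Matrix.vecHead, Matrix.vecTail] at H014
      simp [phi0, eForm, Matrix.det_fin_three, Matrix.mulVec_single, Pi.single_apply,
        Matrix.vecHead, Matrix.vecTail] at H015
      simp [phi0, eForm, Matrix.det_fin_three, Matrix.mulVec_single, Pi.single_apply,
        Matrix.vecHead, Matrix.vecTail] at H016
      simp [phi0, eForm, Matrix.det_fin_three, Matrix.mulVec_single, Pi.single_apply,
        Matrix.vecHead, Matrix.vecTail] at H023
      simp [phi0, eForm, Matrix.det_fin_three, Matrix.mulVec_single, Pi.single_apply,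
        Matrix.vecHead, Matrix.vecTail] at H024
      simp [phi0, eForm, Matrix.det_fin_three, Matrix.mulVec_single, Pi.single_apply,
        Matrix.vecHead, Matrix.vecTail] at H025
      simp [phi0, eForm, Matrix.det_fin_three, Matrix.mulVec_single, Pi.single_apply,
        Matrix.vecHead, Matrix.vecTail] at H026
      simp [phi0, eForm, Matrix.det_fin_three, Matrix.mulVec_single, Pi.single_apply,
        Matrix.vecHead, Matrix.vecTail] at H034
      simp [phi0, eForm, Matrix.det_fin_three, Matrix.mulVec_single, Pi.single_apply,
        Matrix.vecHead, Matrix.vecTail] at H035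
      simp [phi0, eForm, Matrix.det_fin_three, Matrix.mulVec_single, Pi.single_apply,
        Matrix.vecHead, Matrix.vecTail] at H036
      simp [phi0, eForm, Matrix.det_fin_three, Matrix.mulVec_single, Pi.single_apply,
        Matrix.vecHead, Matrix.vecTail] at H045
      simp [phi0, eForm, Matrix.det_fin_three, Matrix.mulVec_single, Pi.single_apply,
        Matrix.vecHead, Matrix.vecTail] at H046
      simp [phi0, eForm, Matrix.det_fin_three, Matrix.mulVec_single, Pi.single_apply,
        Matrix.vecHead, Matrix.vecTail] at H056
      simp [phi0, eForm, Matrix.det_fin_three, Matrix.mulVec_single, Pi.single_apply,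
        Matrix.vecHead, Matrix.vecTail] at H123
      simp [phi0, eForm, Matrix.det_fin_three, Matrix.mulVec_single, Pi.single_apply,
        Matrix.vecHead, Matrix.vecTail] at H124
      simp [phi0, eForm, Matrix.det_fin_three, Matrix.mulVec_single, Pi.single_apply,
        Matrix.vecHead, Matrix.vecTail] at H125
      simp [phi0, eForm, Matrix.det_fin_three, Matrix.mulVec_single, Pi.single_apply,
        Matrix.vecHead, Matrix.vecTail] at H126
      simp [phi0, eForm, Matrix.det_fin_three, Matrix.mulVec_single, Pi.single_apply,
        Matrix.vecHead, Matrix.vecTail] at H134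
      simp [phi0, eForm, Matrix.det_fin_three, Matrix.mulVec_single, Pi.single_apply,
        Matrix.vecHead, Matrix.vecTail] at H135
      simp [phi0, eForm, Matrix.det_fin_three, Matrix.mulVec_single, Pi.single_apply,
        Matrix.vecHead, Matrix.vecTail] at H136
      simp [phi0, eForm, Matrix.det_fin_three, Matrix.mulVec_single, Pi.single_apply,
        Matrix.vecHead, Matrix.vecTail] at H145
      simp [phi0, eForm, Matrix.det_fin_three, Matrix.mulVec_single, Pi.single_apply,
        Matrix.vecHead, Matrix.vecTail] at H146
      simp [phi0, eForm, Matrix.det_fin_three, Matrix.mulVec_single, Pi.single_apply,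
        Matrix.vecHead, Matrix.vecTail] at H156
      simp [phi0, eForm, Matrix.det_fin_three, Matrix.mulVec_single, Pi.single_apply,
        Matrix.vecHead, Matrix.vecTail] at H234
      simp [phi0, eForm, Matrix.det_fin_three, Matrix.mulVec_single, Pi.single_apply,
        Matrix.vecHead, Matrix.vecTail] at H235
      simp [phi0, eForm, Matrix.det_fin_three, Matrix.mulVec_single, Pi.single_apply,
        Matrix.vecHead, Matrix.vecTail] at H236
      simp [phi0, eForm, Matrix.det_fin_three, Matrix.mulVec_single, Pi.single_apply,
        Matrix.vecHead, Matrix.vecTail] at H245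
      simp [phi0, eForm, Matrix.det_fin_three, Matrix.mulVec_single, Pi.single_apply,
        Matrix.vecHead, Matrix.vecTail] at H246
      simp [phi0, eForm, Matrix.det_fin_three, Matrix.mulVec_single, Pi.single_apply,
        Matrix.vecHead, Matrix.vecTail] at H256
      simp [phi0, eForm, Matrix.det_fin_three, Matrix.mulVec_single, Pi.single_apply,
        Matrix.vecHead, Matrix.vecTail] at H345
      simp [phi0, eForm, Matrix.det_fin_three, Matrix.mulVec_single, Pi.single_apply,
        Matrix.vecHead, Matrix.vecTail] at H346
      simp [phi0, eForm, Matrix.det_fin_three, Matrix.mulVec_single, Pi.single_apply,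
        Matrix.vecHead, Matrix.vecTail] at H356
      simp [phi0, eForm, Matrix.det_fin_three, Matrix.mulVec_single, Pi.single_apply,
        Matrix.vecHead, Matrix.vecTail] at H456
      intro i j
      fin_cases i <;> fin_cases j
      · show N 0 0 = - N 0 0
        linear_combination (2/3 : ℝ) * H012 + (2/3 : ℝ) * H034 + (2/3 : ℝ) * H056 + (-1/3 : ℝ) * H135 + (1/3 : ℝ) * H146 + (1/3 : ℝ) * H236 + (1/3 : ℝ) * H245
      · show N 1 0 = - N 0 1
        linear_combination (1/2 : ℝ) * H035 + (-1/2 : ℝ) * H046 + (1/2 : ℝ) * H134 + (1/2 : ℝ) * H156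
      · show N 2 0 = - N 0 2
        linear_combination (-1/2 : ℝ) * H036 + (-1/2 : ℝ) * H045 + (1/2 : ℝ) * H234 + (1/2 : ℝ) * H256
      · show N 3 0 = - N 0 3
        linear_combination (-1/2 : ℝ) * H015 + (1/2 : ℝ) * H026 + (1/2 : ℝ) * H123 + (1/2 : ℝ) * H356
      · show N 4 0 = - N 0 4
        linear_combination (1/2 : ℝ) * H016 + (1/2 : ℝ) * H025 + (1/2 : ℝ) * H124 + (1/2 : ℝ) * H456
      · show N 5 0 = - N 0 5
        linear_combination (1/2 : ℝ) * H013 + (-1/2 : ℝ) * H024 + (1/2 : ℝ) * H125 + (1/2 : ℝ) * H345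
      · show N 6 0 = - N 0 6
        linear_combination (-1/2 : ℝ) * H014 + (-1/2 : ℝ) * H023 + (1/2 : ℝ) * H126 + (1/2 : ℝ) * H346
      · show N 0 1 = - N 1 0
        linear_combination (1/2 : ℝ) * H035 + (-1/2 : ℝ) * H046 + (1/2 : ℝ) * H134 + (1/2 : ℝ) * H156
      · show N 1 1 = - N 1 1
        linear_combination (2/3 : ℝ) * H012 + (-1/3 : ℝ) * H034 + (-1/3 : ℝ) * H056 + (2/3 : ℝ) * H135 + (-2/3 : ℝ) * H146 + (1/3 : ℝ) * H236 + (1/3 : ℝ) * H245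
      · show N 2 1 = - N 1 2
        linear_combination (-1/2 : ℝ) * H136 + (-1/2 : ℝ) * H145 + (1/2 : ℝ) * H235 + (-1/2 : ℝ) * H246
      · show N 3 1 = - N 1 3
        linear_combination (1/2 : ℝ) * H014 + (-1/2 : ℝ) * H023 + (1/2 : ℝ) * H126 + (-1/2 : ℝ) * H346
      · show N 4 1 = - N 1 4
        linear_combination (-1/2 : ℝ) * H013 + (-1/2 : ℝ) * H024 + (1/2 : ℝ) * H125 + (-1/2 : ℝ) * H345
      · show N 5 1 = - N 1 5
        linear_combination (1/2 : ℝ) * H016 + (-1/2 : ℝ) * H025 + (-1/2 : ℝ) * H124 + (1/2 : ℝ) * H456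
      · show N 6 1 = - N 1 6
        linear_combination (-1/2 : ℝ) * H015 + (-1/2 : ℝ) * H026 + (-1/2 : ℝ) * H123 + (1/2 : ℝ) * H356
      · show N 0 2 = - N 2 0
        linear_combination (-1/2 : ℝ) * H036 + (-1/2 : ℝ) * H045 + (1/2 : ℝ) * H234 + (1/2 : ℝ) * H256
      · show N 1 2 = - N 2 1
        linear_combination (-1/2 : ℝ) * H136 + (-1/2 : ℝ) * H145 + (1/2 : ℝ) * H235 + (-1/2 : ℝ) * H246
      · show N 2 2 = - N 2 2
        linear_combination (2/3 : ℝ) * H012 + (-1/3 : ℝ) * H034 + (-1/3 : ℝ) * H056 + (-1/3 : ℝ) * H135 + (1/3 : ℝ) * H146 + (-2/3 : ℝ) * H236 + (-2/3 : ℝ) * H245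
      · show N 3 2 = - N 2 3
        linear_combination (1/2 : ℝ) * H013 + (1/2 : ℝ) * H024 + (1/2 : ℝ) * H125 + (-1/2 : ℝ) * H345
      · show N 4 2 = - N 2 4
        linear_combination (1/2 : ℝ) * H014 + (-1/2 : ℝ) * H023 + (-1/2 : ℝ) * H126 + (1/2 : ℝ) * H346
      · show N 5 2 = - N 2 5
        linear_combination (1/2 : ℝ) * H015 + (1/2 : ℝ) * H026 + (-1/2 : ℝ) * H123 + (1/2 : ℝ) * H356
      · show N 6 2 = - N 2 6
        linear_combination (1/2 : ℝ) * H016 + (-1/2 : ℝ) * H025 + (1/2 : ℝ) * H124 + (-1/2 : ℝ) * H456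
      · show N 0 3 = - N 3 0
        linear_combination (-1/2 : ℝ) * H015 + (1/2 : ℝ) * H026 + (1/2 : ℝ) * H123 + (1/2 : ℝ) * H356
      · show N 1 3 = - N 3 1
        linear_combination (1/2 : ℝ) * H014 + (-1/2 : ℝ) * H023 + (1/2 : ℝ) * H126 + (-1/2 : ℝ) * H346
      · show N 2 3 = - N 3 2
        linear_combination (1/2 : ℝ) * H013 + (1/2 : ℝ) * H024 + (1/2 : ℝ) * H125 + (-1/2 : ℝ) * H345
      · show N 3 3 = - N 3 3
        linear_combination (-1/3 : ℝ) * H012 + (2/3 : ℝ) * H034 + (-1/3 : ℝ) * H056 + (2/3 : ℝ) * H135 + (1/3 : ℝ) * H146 + (-2/3 : ℝ) * H236 + (1/3 : ℝ) * H245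
      · show N 4 3 = - N 3 4
        linear_combination (-1/2 : ℝ) * H136 + (1/2 : ℝ) * H145 + (-1/2 : ℝ) * H235 + (-1/2 : ℝ) * H246
      · show N 5 3 = - N 3 5
        linear_combination (1/2 : ℝ) * H036 + (-1/2 : ℝ) * H045 + (1/2 : ℝ) * H234 + (-1/2 : ℝ) * H256
      · show N 6 3 = - N 3 6
        linear_combination (-1/2 : ℝ) * H035 + (-1/2 : ℝ) * H046 + (1/2 : ℝ) * H134 + (-1/2 : ℝ) * H156
      · show N 0 4 = - N 4 0
        linear_combination (1/2 : ℝ) * H016 + (1/2 : ℝ) * H025 + (1/2 : ℝ) * H124 + (1/2 : ℝ) * H456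
      · show N 1 4 = - N 4 1
        linear_combination (-1/2 : ℝ) * H013 + (-1/2 : ℝ) * H024 + (1/2 : ℝ) * H125 + (-1/2 : ℝ) * H345
      · show N 2 4 = - N 4 2
        linear_combination (1/2 : ℝ) * H014 + (-1/2 : ℝ) * H023 + (-1/2 : ℝ) * H126 + (1/2 : ℝ) * H346
      · show N 3 4 = - N 4 3
        linear_combination (-1/2 : ℝ) * H136 + (1/2 : ℝ) * H145 + (-1/2 : ℝ) * H235 + (-1/2 : ℝ) * H246
      · show N 4 4 = - N 4 4
        linear_combination (-1/3 : ℝ) * H012 + (2/3 : ℝ) * H034 + (-1/3 : ℝ) * H056 + (-1/3 : ℝ) * H135 + (-2/3 : ℝ) * H146 + (1/3 : ℝ) * H236 + (-2/3 : ℝ) * H245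
      · show N 5 4 = - N 4 5
        linear_combination (1/2 : ℝ) * H035 + (1/2 : ℝ) * H046 + (1/2 : ℝ) * H134 + (-1/2 : ℝ) * H156
      · show N 6 4 = - N 4 6
        linear_combination (1/2 : ℝ) * H036 + (-1/2 : ℝ) * H045 + (-1/2 : ℝ) * H234 + (1/2 : ℝ) * H256
      · show N 0 5 = - N 5 0
        linear_combination (1/2 : ℝ) * H013 + (-1/2 : ℝ) * H024 + (1/2 : ℝ) * H125 + (1/2 : ℝ) * H345
      · show N 1 5 = - N 5 1
        linear_combination (1/2 : ℝ) * H016 + (-1/2 : ℝ) * H025 + (-1/2 : ℝ) * H124 + (1/2 : ℝ) * H456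
      · show N 2 5 = - N 5 2
        linear_combination (1/2 : ℝ) * H015 + (1/2 : ℝ) * H026 + (-1/2 : ℝ) * H123 + (1/2 : ℝ) * H356
      · show N 3 5 = - N 5 3
        linear_combination (1/2 : ℝ) * H036 + (-1/2 : ℝ) * H045 + (1/2 : ℝ) * H234 + (-1/2 : ℝ) * H256
      · show N 4 5 = - N 5 4
        linear_combination (1/2 : ℝ) * H035 + (1/2 : ℝ) * H046 + (1/2 : ℝ) * H134 + (-1/2 : ℝ) * H156
      · show N 5 5 = - N 5 5
        linear_combination (-1/3 : ℝ) * H012 + (-1/3 : ℝ) * H034 + (2/3 : ℝ) * H056 + (2/3 : ℝ) * H135 + (1/3 : ℝ) * H146 + (1/3 : ℝ) * H236 + (-2/3 : ℝ) * H245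
      · show N 6 5 = - N 5 6
        linear_combination (1/2 : ℝ) * H136 + (-1/2 : ℝ) * H145 + (-1/2 : ℝ) * H235 + (-1/2 : ℝ) * H246
      · show N 0 6 = - N 6 0
        linear_combination (-1/2 : ℝ) * H014 + (-1/2 : ℝ) * H023 + (1/2 : ℝ) * H126 + (1/2 : ℝ) * H346
      · show N 1 6 = - N 6 1
        linear_combination (-1/2 : ℝ) * H015 + (-1/2 : ℝ) * H026 + (-1/2 : ℝ) * H123 + (1/2 : ℝ) * H356
      · show N 2 6 = - N 6 2
        linear_combination (1/2 : ℝ) * H016 + (-1/2 : ℝ) * H025 + (1/2 : ℝ) * H124 + (-1/2 : ℝ) * H456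
      · show N 3 6 = - N 6 3
        linear_combination (-1/2 : ℝ) * H035 + (-1/2 : ℝ) * H046 + (1/2 : ℝ) * H134 + (-1/2 : ℝ) * H156
      · show N 4 6 = - N 6 4
        linear_combination (1/2 : ℝ) * H036 + (-1/2 : ℝ) * H045 + (-1/2 : ℝ) * H234 + (1/2 : ℝ) * H256
      · show N 5 6 = - N 6 5
        linear_combination (1/2 : ℝ) * H136 + (-1/2 : ℝ) * H145 + (-1/2 : ℝ) * H235 + (-1/2 : ℝ) * H246
      · show N 6 6 = - N 6 6
        linear_combination (-1/3 : ℝ) * H012 + (-1/3 : ℝ) * H034 + (2/3 : ℝ) * H056 + (-1/3 : ℝ) * H135 + (-2/3 : ℝ) * H146 + (-2/3 : ℝ) * H236 + (1/3 : ℝ) * H245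
    have hNNij : ∀ i j, (N * N) i j = 0 := by intro i j; rw [hNN]; simp
    have hsq : ∀ i, (N i 0)^2 + (N i 1)^2 + (N i 2)^2 + (N i 3)^2 + (N i 4)^2 + (N i 5)^2
        + (N i 6)^2 = 0 := by
      intro i
      have e := hNNij i i
      rw [Matrix.mul_apply, Fin.sum_univ_seven] at e
      linear_combination (-1 : ℝ) * e + N i 0 * hskew i 0 + N i 1 * hskew i 1
        + N i 2 * hskew i 2 + N i 3 * hskew i 3 + N i 4 * hskew i 4 + N i 5 * hskew i 5
        + N i 6 * hskew i 6
    have hNzero : ∀ i j, N i j = 0 := by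
      intro i j
      have h := hsq i
      have hsqz : (N i j)^2 = 0 := by
        fin_cases j
        · show (N i 0)^2 = 0
          linarith [sq_nonneg (N i 0), sq_nonneg (N i 1), sq_nonneg (N i 2), sq_nonneg (N i 3),
            sq_nonneg (N i 4), sq_nonneg (N i 5), sq_nonneg (N i 6)]
        · show (N i 1)^2 = 0
          linarith [sq_nonneg (N i 0), sq_nonneg (N i 1), sq_nonneg (N i 2), sq_nonneg (N i 3),
            sq_nonneg (N i 4), sq_nonneg (N i 5), sq_nonneg (N i 6)]
        · show (N i 2)^2 = 0
          linarith [sq_nonneg (N i 0), sq_nonneg (N i 1), sq_nonneg (N i 2), sq_nonneg (N i 3),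
            sq_nonneg (N i 4), sq_nonneg (N i 5), sq_nonneg (N i 6)]
        · show (N i 3)^2 = 0
          linarith [sq_nonneg (N i 0), sq_nonneg (N i 1), sq_nonneg (N i 2), sq_nonneg (N i 3),
            sq_nonneg (N i 4), sq_nonneg (N i 5), sq_nonneg (N i 6)]
        · show (N i 4)^2 = 0
          linarith [sq_nonneg (N i 0), sq_nonneg (N i 1), sq_nonneg (N i 2), sq_nonneg (N i 3),
            sq_nonneg (N i 4), sq_nonneg (N i 5), sq_nonneg (N i 6)]
        · show (N i 5)^2 = 0
          linarith [sq_nonneg (N i 0), sq_nonneg (N i 1), sq_nonneg (N i 2), sq_nonneg (N i 3),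
            sq_nonneg (N i 4), sq_nonneg (N i 5), sq_nonneg (N i 6)]
        · show (N i 6)^2 = 0
          linarith [sq_nonneg (N i 0), sq_nonneg (N i 1), sq_nonneg (N i 2), sq_nonneg (N i 3),
            sq_nonneg (N i 4), sq_nonneg (N i 5), sq_nonneg (N i 6)]
      exact pow_eq_zero_iff (by norm_num : (2:ℕ) ≠ 0) |>.mp hsqz
    apply hne
    have hN0 : N = 0 := by ext i j; simpa using hNzero i j
    rw [hA1, hN0, add_zero]
  · -- main case: an injective map from the fixed space into its orthogonal complement.
    rw [SetLike.not_le_iff_exists] at hcase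
    obtain ⟨v, hv, hvF⟩ := hcase
    set vv : Fin 7 → ℝ := ell.symm v with hvv
    have hva : v = ell vv := by simp [hvv]
    have hv_perp : ∀ w ∈ F', vv ⬝ᵥ w = 0 := by
      intro w hw
      have hwE : ell w ∈ F'E := Submodule.mem_map_of_mem hw
      have hiz := (Submodule.mem_orthogonal F'E v).1 hv (ell w) hwE
      rw [hva, inner_ell] at hiz
      rw [dotProduct_comm]
      exact hiz
    set crossL : (Fin 7 → ℝ) →ₗ[ℝ] (Fin 7 → ℝ) :=
      { toFun := cross vv
        map_add' := cross_add_right vv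
        map_smul' := cross_smul_right vv } with hcrossL
    set T : FE →ₗ[ℝ] EuclideanSpace ℝ (Fin 7) :=
      ell.toLinearMap ∘ₗ crossL ∘ₗ ell.symm.toLinearMap ∘ₗ FE.subtype with hT
    have hTval : ∀ w : FE, T w = ell (cross vv (ell.symm w.val)) := by
      intro w; rfl
    have hTmem : ∀ w : FE, T w ∈ FEᗮ := by
      intro w
      obtain ⟨w', hw', hww⟩ := Submodule.mem_map.1 w.2
      rw [Submodule.mem_orthogonal]
      intro u hu
      obtain ⟨u', hu', rfl⟩ := Submodule.mem_map.1 hu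
      rw [hTval]
      have hwv : ell.symm w.val = w' := by rw [← hww]; simp
      rw [hwv, LinearEquiv.coe_coe, inner_ell]
      rw [dotProduct_comm, dot_cross, phi0_cyclic, ← dot_cross, dotProduct_comm]
      exact hv_perp _ (hcrossF w' hw' u' hu')
    set T' : FE →ₗ[ℝ] FEᗮ := T.codRestrict FEᗮ hTmem with hT'
    have hinj : Function.Injective T' := by
      rw [← LinearMap.ker_eq_bot, Submodule.eq_bot_iff]
      rintro ⟨w, hwFE⟩ hker
      obtain ⟨w', hw', hww⟩ := Submodule.mem_map.1 hwFE
      have hcz : cross vv w' = 0 := by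
        have hT0 : T ⟨w, hwFE⟩ = 0 := by
          have hc := congrArg (Submodule.subtype FEᗮ) hker
          simpa [hT'] using hc
        rw [hTval] at hT0
        have h0 : cross vv (ell.symm w) = 0 := by
          apply ell.injective; simpa using hT0
        have hwv : ell.symm w = w' := by rw [← hww]; simp
        rwa [hwv] at h0
      have hw0 : w' = 0 := by
        by_contra hw0
        have hd : w' ⬝ᵥ w' ≠ 0 := fun h => hw0 (dotProduct_self_eq_zero.mp h)
        have hnorm : (vv ⬝ᵥ vv) * (w' ⬝ᵥ w') - (vv ⬝ᵥ w')^2 = 0 := by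
          rw [← cross_norm, hcz]
          simp
        have hz : ((w' ⬝ᵥ w') • vv - (vv ⬝ᵥ w') • w') ⬝ᵥ ((w' ⬝ᵥ w') • vv - (vv ⬝ᵥ w') • w')
            = 0 := by
          simp only [sub_dotProduct, dotProduct_sub, smul_dotProduct,
            dotProduct_smul, smul_eq_mul, dotProduct_comm w' vv]
          linear_combination (w' ⬝ᵥ w') * hnorm
        have hz2 := dotProduct_self_eq_zero.mp hz
        have hveq : vv = ((w' ⬝ᵥ w')⁻¹ * (vv ⬝ᵥ w')) • w' := by
          have hs : (w' ⬝ᵥ w') • vv = (vv ⬝ᵥ w') • w' := by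
            have := sub_eq_zero.mp hz2
            exact this
          calc vv = (w' ⬝ᵥ w')⁻¹ • ((w' ⬝ᵥ w') • vv) := by rw [inv_smul_smul₀ hd]
          _ = (w' ⬝ᵥ w')⁻¹ • ((vv ⬝ᵥ w') • w') := by rw [hs]
          _ = ((w' ⬝ᵥ w')⁻¹ * (vv ⬝ᵥ w')) • w' := by rw [smul_smul]
        have hvF2 : vv ∈ F := by
          rw [hveq]
          exact F.smul_mem _ hw'
        exact hvF (by rw [hva]; exact Submodule.mem_map_of_mem hvF2)
      apply Subtype.ext
      show w = 0
      rw [← hww, hw0, map_zero]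
    have hfin1 : Module.finrank ℝ FE ≤ Module.finrank ℝ FEᗮ :=
      LinearMap.finrank_le_finrank_of_injective hinj
    have hfin2 := Submodule.finrank_add_finrank_orthogonal FE
    have hE7 : Module.finrank ℝ (EuclideanSpace ℝ (Fin 7)) = 7 := finrank_euclideanSpace_fin
    have hFFE : Module.finrank ℝ FE = Module.finrank ℝ F := LinearEquiv.finrank_map_eq ell F
    omega

theorem circle_in_G2_fixed_space_dim_le_three
    (f : Circle →* GL (Fin 7) ℝ) (hcont : Continuous f)
    (hG2 : ∀ z : Circle, MemG2 (f z)) (hnontrivial : ∃ z : Circle, f z ≠ 1) :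
    Module.finrank ℝ (fixedSpaceOfCircle f) ≤ 3 := by
  obtain ⟨z₀, hz₀⟩ := hnontrivial
  have h1 : MemG2 (f z₀) := hG2 z₀
  have h2 : MemG2 ((f z₀)^2) := by have := hG2 (z₀ ^ 2); rwa [map_pow] at this
  have h3 : MemG2 ((f z₀)^3) := by have := hG2 (z₀ ^ 3); rwa [map_pow] at this
  set A : Matrix (Fin 7) (Fin 7) ℝ := ((f z₀ : GL (Fin 7) ℝ) : Matrix (Fin 7) (Fin 7) ℝ)
    with hA
  have h1' : ∀ X Y Z, phi0 (A.mulVec X) (A.mulVec Y) (A.mulVec Z) = phi0 X Y Z := h1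
  have h2' : ∀ X Y Z, phi0 ((A^2).mulVec X) ((A^2).mulVec Y) ((A^2).mulVec Z) = phi0 X Y Z := by
    intro X Y Z
    have := h2 X Y Z
    rwa [Units.val_pow_eq_pow_val] at this
  have h3' : ∀ X Y Z, phi0 ((A^3).mulVec X) ((A^3).mulVec Y) ((A^3).mulVec Z) = phi0 X Y Z := by
    intro X Y Z
    have := h3 X Y Z
    rwa [Units.val_pow_eq_pow_val] at this
  have hne : A ≠ 1 := by
    intro h
    exact hz₀ (Units.ext (by rw [hA] at h; rw [h]; rfl))
  have hkey := key_lemma A h1' h2' h3' hne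
  refine le_trans (Submodule.finrank_mono ?_) hkey
  intro v hv
  rw [LinearMap.mem_ker]
  have hfix : A.mulVec v = v := hv z₀
  simp [Matrix.mulVecLin_apply, sub_eq_zero, hfix]
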